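/- Let O = ℂ[x_1,...,x_n], and let y_1,...,y_d ∈ O be algebraically independent polynomials such that at some point the d×n Jacobian matrix [∂y_i/∂x_j] has rank d. Extend to the jet ring O_∞ = ℂ[x_j^{(i)} : i ≥ 0] with derivation D(x_j^{(i)}) = x_j^{(i+1)}, and set y_i^{(k)} = D^k(y_i). Then the family {y_i^{(k)} : 1 ≤ i ≤ d, k ≥ 0} is algebraically independent over ℂ, and distinct monomials in the variables y_i^{(k)} with k ≥ 1 are linearly independent over the rational function field ℂ(x_1,...,x_n). -/

import Mathlib

open MvPolynomial

/-- The derivation `D` of the jet ring `O_∞ = ℂ[x_j^{(i)} : 1 ≤ j ≤ n, i ≥ 0]`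
with `D(x_j^{(i)}) = x_j^{(i+1)}`. -/
noncomputable def jetD (n : ℕ) :
    Derivation ℂ (MvPolynomial (Fin n × ℕ) ℂ) (MvPolynomial (Fin n × ℕ) ℂ) :=
  MvPolynomial.mkDerivation ℂ fun v => X (v.1, v.2 + 1)

namespace Stmt13

variable (n : ℕ)

@[simp] lemma jetD_X (v : Fin n × ℕ) : jetD n (X v) = X (v.1, v.2 + 1) :=
  MvPolynomial.mkDerivation_X _ _ _

lemma jetD_C (a : ℂ) : jetD n (C a : MvPolynomial (Fin n × ℕ) ℂ) = 0 := by
  have : (C a : MvPolynomial (Fin n × ℕ) ℂ) = algebraMap ℂ _ a := rfl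
  rw [this, Derivation.map_algebraMap]

lemma jetD_rename (f : MvPolynomial (Fin n) ℂ) :
    jetD n (rename (fun j => (j, 0)) f)
      = ∑ j : Fin n, rename (fun j => (j, 0)) (pderiv j f) * X (j, 1) := by
  induction f using MvPolynomial.induction_on with
  | C a => simp [jetD_C]
  | add p q hp hq =>
      simp only [map_add, hp, hq, add_mul, Finset.sum_add_distrib]
  | mul_X p j hp =>
      simp only [map_mul, rename_X, Derivation.leibniz, smul_eq_mul, hp, jetD_X,
        pderiv_mul, pderiv_X, add_mul, Finset.sum_add_distrib, map_add]
      rw [Finset.mul_sum]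
      have h1 : ∀ j' : Fin n,
          (rename fun j => (j, 0)) p * (rename fun j => (j, 0)) ((Pi.single j' 1 : Fin n → MvPolynomial (Fin n) ℂ) j) * X (j', 1)
            = if j = j' then (rename fun j => (j, 0)) p * X (j, 1) else 0 := by
        intro j'
        by_cases h : j = j' <;> simp [Pi.single_apply, h]
      rw [Finset.sum_congr rfl fun j' _ => h1 j']
      simp only [Finset.sum_ite_eq, Finset.mem_univ, if_true, zero_add]
      congr 1
      exact Finset.sum_congr rfl fun x _ => (mul_assoc _ _ _).symm


variable (n : ℕ)

/-- The subalgebra of jet polynomials of level at most `k`. -/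
noncomputable def AdjA (k : ℕ) : Subalgebra ℂ (MvPolynomial (Fin n × ℕ) ℂ) :=
  Algebra.adjoin ℂ {q | ∃ v : Fin n × ℕ, v.2 ≤ k ∧ q = X v}

lemma adjA_mono {k k' : ℕ} (h : k ≤ k') : AdjA n k ≤ AdjA n k' :=
  Algebra.adjoin_mono (fun q ⟨v, hv, hq⟩ => ⟨v, hv.trans h, hq⟩)

lemma X_mem_adjA {k : ℕ} (v : Fin n × ℕ) (h : v.2 ≤ k) : X v ∈ AdjA n k :=
  Algebra.subset_adjoin ⟨v, h, rfl⟩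

lemma rename_mem_adjA (f : MvPolynomial (Fin n) ℂ) (k : ℕ) :
    rename (fun j => (j, 0)) f ∈ AdjA n k := by
  induction f using MvPolynomial.induction_on with
  | C a => rw [rename_C]; exact (AdjA n k).algebraMap_mem a
  | add p q hp hq => rw [map_add]; exact add_mem hp hq
  | mul_X p j hp => rw [map_mul, rename_X]; exact mul_mem hp (X_mem_adjA n _ (Nat.zero_le k))

lemma jetD_mem_adjA {k : ℕ} {g : MvPolynomial (Fin n × ℕ) ℂ} (hg : g ∈ AdjA n k) :
    jetD n g ∈ AdjA n (k + 1) := by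
  induction hg using Algebra.adjoin_induction with
  | mem q hq =>
      obtain ⟨v, hv, rfl⟩ := hq
      rw [jetD_X]
      exact X_mem_adjA n _ (Nat.succ_le_succ hv)
  | algebraMap r => rw [Derivation.map_algebraMap]; exact zero_mem _
  | add x y hx hy hx' hy' => rw [map_add]; exact add_mem hx' hy'
  | mul x y hx hy hx' hy' =>
      rw [Derivation.leibniz, smul_eq_mul, smul_eq_mul]
      exact add_mem (mul_mem (adjA_mono n k.le_succ hx) hy')
        (mul_mem (adjA_mono n k.le_succ hy) hx')

variable {d : ℕ} (y : Fin d → MvPolynomial (Fin n) ℂ) (pt : Fin n → ℂ)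

lemma struct (i : Fin d) : ∀ k : ℕ,
    (⇑(jetD n))^[k + 1] (rename (fun j => (j, 0)) (y i))
      - ∑ j : Fin n, rename (fun j => (j, 0)) (pderiv j (y i)) * X (j, k + 1)
      ∈ AdjA n k := by
  intro k
  induction k with
  | zero =>
      rw [Function.iterate_one, jetD_rename, sub_self]
      exact zero_mem _
  | succ k ih =>
      have key : (⇑(jetD n))^[k + 1 + 1] (rename (fun j => (j, 0)) (y i))
          - ∑ j : Fin n, rename (fun j => (j, 0)) (pderiv j (y i)) * X (j, k + 1 + 1)
          = jetD n ((⇑(jetD n))^[k + 1] (rename (fun j => (j, 0)) (y i))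
              - ∑ j : Fin n, rename (fun j => (j, 0)) (pderiv j (y i)) * X (j, k + 1))
            + ∑ j : Fin n, jetD n (rename (fun j => (j, 0)) (pderiv j (y i))) * X (j, k + 1) := by
        rw [Function.iterate_succ_apply', map_sub, map_sum]
        have : ∀ j : Fin n,
            jetD n (rename (fun j => (j, 0)) (pderiv j (y i)) * X (j, k + 1))
              = rename (fun j => (j, 0)) (pderiv j (y i)) * X (j, k + 1 + 1)
                + jetD n (rename (fun j => (j, 0)) (pderiv j (y i))) * X (j, k + 1) := by
          intro j
          rw [Derivation.leibniz, smul_eq_mul, smul_eq_mul, jetD_X, mul_comm (X (j, k+1)) _]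
        rw [Finset.sum_congr rfl fun j _ => this j, Finset.sum_add_distrib]
        ring
      rw [key]
      refine add_mem (jetD_mem_adjA n ih) (sum_mem fun j _ => ?_)
      rw [jetD_rename]
      refine mul_mem (sum_mem fun j' _ => mul_mem
        (adjA_mono n (Nat.zero_le _) (rename_mem_adjA n _ 0))
        (X_mem_adjA n _ (Nat.succ_le_succ (Nat.zero_le k)))) (X_mem_adjA n _ le_rfl)

section Phi
set_option maxHeartbeats 1000000
set_option synthInstance.maxHeartbeats 200000

/-- The map from the jet ring to the jet ring with level-0 variables made constants. -/
noncomputable def phi :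
    MvPolynomial (Fin n × ℕ) ℂ →ₐ[ℂ]
      MvPolynomial (Fin n × ℕ) (FractionRing (MvPolynomial (Fin n) ℂ)) :=
  aeval fun v =>
    if v.2 = 0 then C (algebraMap (MvPolynomial (Fin n) ℂ) _ (X v.1)) else X v

@[simp] lemma phi_X0 (j : Fin n) :
    phi n (X (j, 0)) = C (algebraMap (MvPolynomial (Fin n) ℂ) _ (X j)) := by
  simp [phi]

@[simp] lemma phi_X1 (j : Fin n) (k : ℕ) :
    phi n (X (j, k + 1)) = X (j, k + 1) := by
  simp [phi]

lemma phi_rename (f : MvPolynomial (Fin n) ℂ) :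
    phi n (rename (fun j => (j, 0)) f)
      = C (algebraMap (MvPolynomial (Fin n) ℂ) _ f) := by
  rw [phi, aeval_rename]
  induction f using MvPolynomial.induction_on with
  | C a =>
      simp only [aeval_C]
      calc algebraMap ℂ (MvPolynomial (Fin n × ℕ) (FractionRing (MvPolynomial (Fin n) ℂ))) a
          = C (algebraMap ℂ (FractionRing (MvPolynomial (Fin n) ℂ)) a) := by
            rw [IsScalarTower.algebraMap_apply ℂ (FractionRing (MvPolynomial (Fin n) ℂ))
              (MvPolynomial (Fin n × ℕ) (FractionRing (MvPolynomial (Fin n) ℂ))),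
              MvPolynomial.algebraMap_eq]
        _ = C (algebraMap (MvPolynomial (Fin n) ℂ) (FractionRing (MvPolynomial (Fin n) ℂ)) (C a)) := by
            rw [IsScalarTower.algebraMap_apply ℂ (MvPolynomial (Fin n) ℂ)
              (FractionRing (MvPolynomial (Fin n) ℂ)), MvPolynomial.algebraMap_eq]
  | add p q hp hq => simp only [map_add, hp, hq]
  | mul_X p j hp => simp only [map_mul, aeval_X, hp, Function.comp_apply]; simp

end Phi

section SK
set_option maxHeartbeats 1000000
set_option synthInstance.maxHeartbeats 200000


/-- Levels-at-most-`k` subalgebra over the fraction field. -/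
noncomputable def SK (k : ℕ) :
    Subalgebra (FractionRing (MvPolynomial (Fin n) ℂ))
      (MvPolynomial (Fin n × ℕ) (FractionRing (MvPolynomial (Fin n) ℂ))) :=
  Algebra.adjoin _ {q | ∃ v : Fin n × ℕ, v.2 ≤ k ∧ q = X v}

lemma phi_mem_SK {k : ℕ} {g : MvPolynomial (Fin n × ℕ) ℂ} (hg : g ∈ AdjA n k) :
    phi n g ∈ SK n k := by
  induction hg using Algebra.adjoin_induction with
  | mem q hq =>
      obtain ⟨⟨j, l⟩, hv, rfl⟩ := hq
      cases l with
      | zero => rw [phi_X0]; exact (SK n k).algebraMap_mem _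
      | succ l => rw [phi_X1]; exact Algebra.subset_adjoin ⟨(j, l + 1), hv, rfl⟩
  | algebraMap r =>
      rw [AlgHom.commutes]
      rw [IsScalarTower.algebraMap_apply ℂ (FractionRing (MvPolynomial (Fin n) ℂ))
        (MvPolynomial (Fin n × ℕ) (FractionRing (MvPolynomial (Fin n) ℂ)))]
      exact (SK n k).algebraMap_mem _
  | add x y hx hy hx' hy' => rw [map_add]; exact add_mem hx' hy'
  | mul x y hx hy hx' hy' => rw [map_mul]; exact mul_mem hx' hy'

end SK

section Mats
set_option maxHeartbeats 1000000
set_option synthInstance.maxHeartbeats 200000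
variable {n}


noncomputable def Emat : Matrix (Fin d) (Fin n) ℂ :=
  Matrix.of fun i j => eval pt (pderiv j (y i))

open Classical in
noncomputable def Bc : Matrix (Fin n) (Fin d) ℂ :=
  if h : ∃ B : Matrix (Fin n) (Fin d) ℂ, Emat y pt * B = 1 then h.choose else 0

lemma EB_eq_one (hrank : (Emat y pt).rank = d) : Emat y pt * Bc y pt = 1 := by
  have hsurj : Function.Surjective (Emat y pt).mulVecLin := by
    rw [← LinearMap.range_eq_top]
    apply Submodule.eq_top_of_finrank_eq
    rw [Matrix.rank] at hrank
    rw [hrank, Module.finrank_fintype_fun_eq_card, Fintype.card_fin]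
  have hex : ∃ B : Matrix (Fin n) (Fin d) ℂ, Emat y pt * B = 1 := by
    refine ⟨Matrix.of fun j i => (hsurj (Pi.single i 1)).choose j, ?_⟩
    ext i' i
    have hspec := (hsurj (Pi.single i (1:ℂ))).choose_spec
    rw [Matrix.mulVecLin_apply] at hspec
    have : (Emat y pt * Matrix.of fun j i => (hsurj (Pi.single i 1)).choose j) i' i
        = ((Emat y pt).mulVec (hsurj (Pi.single i (1:ℂ))).choose) i' := by
      simp [Matrix.mul_apply, Matrix.mulVec, dotProduct]
    rw [this, hspec, Matrix.one_apply, Pi.single_apply]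
  rw [Bc]
  rw [dif_pos hex]
  exact hex.choose_spec

/-- The Jacobian matrix over the polynomial ring. -/
noncomputable def Mmat : Matrix (Fin d) (Fin n) (MvPolynomial (Fin n) ℂ) :=
  Matrix.of fun i j => pderiv j (y i)

noncomputable def Nmat : Matrix (Fin d) (Fin d) (MvPolynomial (Fin n) ℂ) :=
  Mmat y * (Bc y pt).map (C : ℂ → MvPolynomial (Fin n) ℂ)

lemma eval_Nmat (hrank : (Emat y pt).rank = d) :
    (Nmat y pt).map (eval pt) = 1 := by
  have : (Nmat y pt).map (eval pt)
      = (Mmat y).map (eval pt) * ((Bc y pt).map (C : ℂ → MvPolynomial (Fin n) ℂ)).map (eval pt) := by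
    rw [Nmat]
    exact Matrix.map_mul (f := MvPolynomial.eval pt)
  rw [this]
  have h1 : (Mmat y).map (eval pt) = Emat y pt := by
    ext i j; simp [Mmat, Emat]
  have h2 : ((Bc y pt).map (C : ℂ → MvPolynomial (Fin n) ℂ)).map (eval pt) = Bc y pt := by
    ext j i; simp [Matrix.map_apply]
  rw [h1, h2, EB_eq_one y pt hrank]

lemma det_Nmat_ne_zero (hrank : (Emat y pt).rank = d) : (Nmat y pt).det ≠ 0 := by
  intro h0
  have : eval pt (Nmat y pt).det = 1 := by
    rw [RingHom.map_det (MvPolynomial.eval pt)]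
    have : (MvPolynomial.eval pt).mapMatrix (Nmat y pt) = (Nmat y pt).map (eval pt) := rfl
    rw [this, eval_Nmat y pt hrank, Matrix.det_one]
  rw [h0, map_zero] at this
  exact zero_ne_one this

/-- Jacobian over the fraction field. -/
noncomputable def aK : Matrix (Fin d) (Fin n) (FractionRing (MvPolynomial (Fin n) ℂ)) :=
  (Mmat y).map (algebraMap (MvPolynomial (Fin n) ℂ) _)

noncomputable def NK : Matrix (Fin d) (Fin d) (FractionRing (MvPolynomial (Fin n) ℂ)) :=
  (Nmat y pt).map (algebraMap (MvPolynomial (Fin n) ℂ) _)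

noncomputable def bK : Matrix (Fin n) (Fin d) (FractionRing (MvPolynomial (Fin n) ℂ)) :=
  ((Bc y pt).map (algebraMap ℂ _) : Matrix (Fin n) (Fin d) (FractionRing (MvPolynomial (Fin n) ℂ))) * (NK y pt)⁻¹

lemma aK_mul_bK (hrank : (Emat y pt).rank = d) : aK y * bK y pt = 1 := by
  have hBmap : (Bc y pt).map (algebraMap ℂ (FractionRing (MvPolynomial (Fin n) ℂ)))
      = ((Bc y pt).map (C : ℂ → MvPolynomial (Fin n) ℂ)).map
          (algebraMap (MvPolynomial (Fin n) ℂ) (FractionRing (MvPolynomial (Fin n) ℂ))) := by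
    ext j i
    simp only [Matrix.map_apply]
    rw [IsScalarTower.algebraMap_apply ℂ (MvPolynomial (Fin n) ℂ)
      (FractionRing (MvPolynomial (Fin n) ℂ)), MvPolynomial.algebraMap_eq]
  have hmul : aK y * (Bc y pt).map (algebraMap ℂ (FractionRing (MvPolynomial (Fin n) ℂ)))
      = NK y pt := by
    rw [hBmap, aK, NK, Nmat]
    exact (Matrix.map_mul
      (f := algebraMap (MvPolynomial (Fin n) ℂ) (FractionRing (MvPolynomial (Fin n) ℂ)))).symm
  have hdet : IsUnit (NK y pt).det := by
    rw [NK, ← RingHom.mapMatrix_apply, ← RingHom.map_det]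
    rw [isUnit_iff_ne_zero]
    intro h0
    exact det_Nmat_ne_zero y pt hrank
      (IsFractionRing.injective (MvPolynomial (Fin n) ℂ)
        (FractionRing (MvPolynomial (Fin n) ℂ)) (by rw [h0, map_zero]))
  rw [bK, ← Matrix.mul_assoc, hmul, Matrix.mul_nonsing_inv _ hdet]


end Mats

section Core
set_option maxHeartbeats 1000000
set_option synthInstance.maxHeartbeats 400000
variable {n d : ℕ} (y : Fin d → MvPolynomial (Fin n) ℂ) (pt : Fin n → ℂ)

/-- Images of the jets `y_i^{(k+1)}` under `phi`. -/
noncomputable def Z (p : Fin d × ℕ) :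
    MvPolynomial (Fin n × ℕ) (FractionRing (MvPolynomial (Fin n) ℂ)) :=
  phi n ((⇑(jetD n))^[p.2 + 1] (rename (fun j => (j, 0)) (y p.1)))

noncomputable def Hk (i : Fin d) (k : ℕ) :
    MvPolynomial (Fin n × ℕ) (FractionRing (MvPolynomial (Fin n) ℂ)) :=
  Z y (i, k) - ∑ j : Fin n, C (aK y i j) * X (j, k + 1)

lemma Hk_mem (i : Fin d) (k : ℕ) : Hk y i k ∈ SK n k := by
  have h0 := phi_mem_SK (n := n) (struct n y i k)
  have heq : phi n ((⇑(jetD n))^[k + 1] (rename (fun j => (j, 0)) (y i))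
        - ∑ j : Fin n, rename (fun j => (j, 0)) (pderiv j (y i)) * X (j, k + 1))
      = Hk y i k := by
    rw [map_sub, map_sum, Hk, Z]
    congr 1
    refine Finset.sum_congr rfl fun j _ => ?_
    rw [map_mul, phi_rename, phi_X1, aK]
    rfl
  rwa [heq] at h0

noncomputable def valsUpTo :
    ℕ → Fin n × ℕ → MvPolynomial (Fin d × ℕ) (FractionRing (MvPolynomial (Fin n) ℂ))
  | 0 => fun _ => 0
  | (k+1) => fun v =>
      if v.2 = k + 1 then
        ∑ i : Fin d, C (bK y pt v.1 i) *
          (X (i, k) - aeval (valsUpTo k) (Hk y i k))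
      else valsUpTo k v

lemma valsUpTo_stable {k m : ℕ} (hkm : k ≤ m) {v : Fin n × ℕ} (hv : v.2 ≤ k) :
    valsUpTo y pt m v = valsUpTo y pt k v := by
  induction m with
  | zero => rw [Nat.le_zero] at hkm; rw [hkm]
  | succ m ih =>
      rcases Nat.eq_or_lt_of_le hkm with h | h
      · rw [h]
      · have hk : k ≤ m := Nat.lt_succ_iff.mp h
        have : valsUpTo y pt (m + 1) v = valsUpTo y pt m v := by
          rw [valsUpTo]
          beta_reduce
          rw [if_neg (by omega : ¬ v.2 = m + 1)]
        rw [this, ih hk]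

lemma aeval_g_SK {k : ℕ} {f : MvPolynomial (Fin n × ℕ) (FractionRing (MvPolynomial (Fin n) ℂ))}
    (hf : f ∈ SK n k) :
    aeval (fun v : Fin n × ℕ => valsUpTo y pt v.2 v) f = aeval (valsUpTo y pt k) f := by
  induction hf using Algebra.adjoin_induction with
  | mem q hq =>
      obtain ⟨v, hv, rfl⟩ := hq
      rw [aeval_X, aeval_X]
      exact (valsUpTo_stable y pt hv le_rfl).symm
  | algebraMap r => rw [AlgHom.commutes, AlgHom.commutes]
  | add x y hx hy hx' hy' => rw [map_add, map_add, hx', hy']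
  | mul x y hx hy hx' hy' => rw [map_mul, map_mul, hx', hy']

lemma aeval_g_Z (hrank : (Emat y pt).rank = d) (i : Fin d) (k : ℕ) :
    aeval (fun v : Fin n × ℕ => valsUpTo y pt v.2 v) (Z y (i, k)) = X (i, k) := by
  set Kn := FractionRing (MvPolynomial (Fin n) ℂ)
  set T : Fin d → MvPolynomial (Fin d × ℕ) Kn :=
    fun s => X (s, k) - aeval (valsUpTo y pt k) (Hk y s k) with hT
  have hZ : Z y (i, k) = (∑ j : Fin n, C (aK y i j) * X (j, k + 1)) + Hk y i k := by
    rw [Hk]; ring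
  rw [hZ, map_add, map_sum]
  have hgj : ∀ j : Fin n,
      aeval (fun v : Fin n × ℕ => valsUpTo y pt v.2 v) (C (aK y i j) * X (j, k + 1))
        = C (aK y i j) * ∑ s : Fin d, C (bK y pt j s) * T s := by
    intro j
    rw [map_mul, aeval_C, aeval_X]
    have : valsUpTo y pt (k + 1) (j, k + 1)
        = ∑ s : Fin d, C (bK y pt j s) * T s := by
      rw [valsUpTo]
      beta_reduce
      rw [if_pos rfl]
    rw [MvPolynomial.algebraMap_eq, this]
  rw [Finset.sum_congr rfl fun j _ => hgj j]
  have hsum : ∑ j : Fin n, C (aK y i j) * ∑ s : Fin d, C (bK y pt j s) * T s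
      = ∑ s : Fin d, C ((aK y * bK y pt) i s) * T s := by
    have h1 : ∀ j : Fin n, C (aK y i j) * ∑ s : Fin d, C (bK y pt j s) * T s
        = ∑ s : Fin d, C (aK y i j * bK y pt j s) * T s := by
      intro j
      rw [Finset.mul_sum]
      exact Finset.sum_congr rfl fun s _ => by rw [map_mul, mul_assoc]
    rw [Finset.sum_congr rfl fun j _ => h1 j, Finset.sum_comm]
    refine Finset.sum_congr rfl fun s _ => ?_
    rw [Matrix.mul_apply, map_sum, Finset.sum_mul]
  rw [hsum, aK_mul_bK y pt hrank]
  have hone : ∑ s : Fin d, C ((1 : Matrix (Fin d) (Fin d) Kn) i s) * T s = T i := by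
    have : ∀ s : Fin d, C ((1 : Matrix (Fin d) (Fin d) Kn) i s) * T s
        = if s = i then T s else 0 := by
      intro s
      by_cases h : s = i
      · subst h; rw [if_pos rfl, Matrix.one_apply_eq, map_one, one_mul]
      · rw [if_neg h, Matrix.one_apply_ne (Ne.symm h), map_zero, zero_mul]
    rw [Finset.sum_congr rfl fun s _ => this s, Finset.sum_ite_eq', if_pos (Finset.mem_univ i)]
  rw [hone, hT]
  have hH : aeval (fun v : Fin n × ℕ => valsUpTo y pt v.2 v) (Hk y i k)
      = aeval (valsUpTo y pt k) (Hk y i k) := aeval_g_SK y pt (Hk_mem y i k)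
  rw [hH]
  ring

lemma aevalZ_injective (hrank : (Emat y pt).rank = d) :
    Function.Injective (aeval (Z y) :
      MvPolynomial (Fin d × ℕ) (FractionRing (MvPolynomial (Fin n) ℂ)) →ₐ[FractionRing (MvPolynomial (Fin n) ℂ)]
        MvPolynomial (Fin n × ℕ) (FractionRing (MvPolynomial (Fin n) ℂ))) := by
  have hcomp : (aeval (fun v : Fin n × ℕ => valsUpTo y pt v.2 v)).comp (aeval (Z y))
      = AlgHom.id (FractionRing (MvPolynomial (Fin n) ℂ))
          (MvPolynomial (Fin d × ℕ) (FractionRing (MvPolynomial (Fin n) ℂ))) := by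
    apply MvPolynomial.algHom_ext
    intro p
    rw [AlgHom.comp_apply, aeval_X, AlgHom.id_apply]
    have := aeval_g_Z y pt hrank p.1 p.2
    rwa [Prod.mk.eta] at this
  intro P Q hPQ
  have h1 := congrArg (aeval (fun v : Fin n × ℕ => valsUpTo y pt v.2 v)) hPQ
  rwa [← AlgHom.comp_apply, ← AlgHom.comp_apply, hcomp, AlgHom.id_apply, AlgHom.id_apply] at h1

end Core
section Part2
set_option maxHeartbeats 1000000
set_option synthInstance.maxHeartbeats 400000
variable {n d : ℕ} (y : Fin d → MvPolynomial (Fin n) ℂ) (pt : Fin n → ℂ)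

lemma part2 (hrank : (Emat y pt).rank = d)
    (c : ((Fin d × ℕ) →₀ ℕ) →₀ MvPolynomial (Fin n) ℂ)
    (hsupp : ∀ e ∈ c.support, ∀ p ∈ e.support, 1 ≤ p.2)
    (hrel : (c.sum fun e a => rename (fun j => (j, 0)) a *
        e.prod fun p k =>
          ((⇑(jetD n))^[p.2] (rename (fun j => (j, 0)) (y p.1))) ^ k) = 0) :
    c = 0 := by
  set Kn := FractionRing (MvPolynomial (Fin n) ℂ) with hKn
  set ι : MvPolynomial (Fin n) ℂ →+* Kn := algebraMap (MvPolynomial (Fin n) ℂ) Kn with hι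
  set dn : Fin d × ℕ → Fin d × ℕ := fun p => (p.1, p.2 - 1) with hdn
  set P : MvPolynomial (Fin d × ℕ) Kn :=
    c.sum fun e a => monomial (Finsupp.mapDomain dn e) (ι a) with hP
  -- updown inverse on exponents appearing in c
  have updown : ∀ e ∈ c.support,
      Finsupp.mapDomain (fun q : Fin d × ℕ => (q.1, q.2 + 1)) (Finsupp.mapDomain dn e) = e := by
    intro e he
    rw [← Finsupp.mapDomain_comp]
    have : Finsupp.mapDomain ((fun q : Fin d × ℕ => (q.1, q.2 + 1)) ∘ dn) e
        = Finsupp.mapDomain id e := by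
      apply Finsupp.mapDomain_congr
      intro p hp
      have h1 := hsupp e he p hp
      simp only [Function.comp_apply, hdn, id_eq]
      exact Prod.ext rfl (by omega)
    rw [this, Finsupp.mapDomain_id]
  -- Step A : aeval (Z y) P = 0
  have hA : aeval (Z y) P = 0 := by
    have h1 : aeval (Z y) P = c.sum fun e a =>
        C (ι a) * e.prod fun p k => Z y (dn p) ^ k := by
      rw [hP, map_finsuppSum]
      refine Finsupp.sum_congr fun e _ => ?_
      rw [aeval_monomial, MvPolynomial.algebraMap_eq]
      congr 1
      exact Finsupp.prod_mapDomain_index (fun q => pow_zero _) (fun q m₁ m₂ => pow_add _ _ _)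
    have h2 : phi n (c.sum fun e a => rename (fun j => (j, 0)) a *
        e.prod fun p k =>
          ((⇑(jetD n))^[p.2] (rename (fun j => (j, 0)) (y p.1))) ^ k)
        = c.sum fun e a => C (ι a) * e.prod fun p k => Z y (dn p) ^ k := by
      rw [map_finsuppSum]
      refine Finsupp.sum_congr fun e he => ?_
      rw [map_mul, phi_rename, map_finsuppProd]
      congr 1
      refine Finsupp.prod_congr fun p hp => ?_
      rw [map_pow]
      congr 1
      have h3 := hsupp e he p hp
      simp only [hdn, Z]
      rw [show p.2 - 1 + 1 = p.2 by omega]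
    rw [h1, ← h2, hrel, map_zero]
  have hB : P = 0 := by
    apply aevalZ_injective y pt hrank
    rw [hA, map_zero]
  -- Step C : coefficients vanish
  have hC : ∀ e ∈ c.support, False := by
    intro e₀ he₀
    have hcoeff : coeff (Finsupp.mapDomain dn e₀) P = ι (c e₀) := by
      rw [hP, Finsupp.sum]
      rw [MvPolynomial.coeff_sum]
      rw [Finset.sum_eq_single_of_mem e₀ he₀]
      · rw [coeff_monomial, if_pos rfl]
      · intro e he hne
        rw [coeff_monomial, if_neg]
        intro hEq
        apply hne
        have := congrArg (Finsupp.mapDomain (fun q : Fin d × ℕ => (q.1, q.2 + 1))) hEq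
        rwa [updown e he, updown e₀ he₀] at this
    rw [hB, coeff_zero] at hcoeff
    have : c e₀ = 0 := by
      apply IsFractionRing.injective (MvPolynomial (Fin n) ℂ) Kn
      rw [map_zero]
      exact hcoeff.symm
    exact (Finsupp.mem_support_iff.mp he₀) this
  have : c.support = ∅ := Finset.eq_empty_of_forall_notMem hC
  exact Finsupp.support_eq_empty.mp this

end Part2
section Part1
set_option maxHeartbeats 1000000
set_option synthInstance.maxHeartbeats 400000
variable {n d : ℕ} (y : Fin d → MvPolynomial (Fin n) ℂ) (pt : Fin n → ℂ)

/-- Split level-0 variables into coefficients. -/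
noncomputable def splitH : MvPolynomial (Fin d × ℕ) ℂ →ₐ[ℂ]
    MvPolynomial (Fin d × ℕ) (MvPolynomial (Fin d) ℂ) :=
  aeval fun p => if p.2 = 0 then C (X p.1) else X (p.1, p.2 - 1)

noncomputable def unsplitH : MvPolynomial (Fin d × ℕ) (MvPolynomial (Fin d) ℂ) →+*
    MvPolynomial (Fin d × ℕ) ℂ :=
  eval₂Hom (aeval fun i : Fin d => X (i, 0) :
      MvPolynomial (Fin d) ℂ →ₐ[ℂ] MvPolynomial (Fin d × ℕ) ℂ).toRingHom
    (fun q => X (q.1, q.2 + 1))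

lemma splitH_C (r : ℂ) : splitH (d := d) (C r) = C (C r) := by
  have h1 : (C r : MvPolynomial (Fin d × ℕ) ℂ) = algebraMap ℂ _ r := rfl
  rw [h1, AlgHom.commutes]
  rw [IsScalarTower.algebraMap_apply ℂ (MvPolynomial (Fin d) ℂ)
    (MvPolynomial (Fin d × ℕ) (MvPolynomial (Fin d) ℂ)), MvPolynomial.algebraMap_eq,
    MvPolynomial.algebraMap_eq]

lemma splitH_X0 (i : Fin d) : splitH (d := d) (X (i, 0)) = C (X i) := by
  simp [splitH]

lemma splitH_X1 (i : Fin d) (k : ℕ) : splitH (d := d) (X (i, k + 1)) = X (i, k) := by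
  simp [splitH]

lemma splitH_injective : Function.Injective (splitH (d := d)) := by
  have hcomp : (unsplitH (d := d)).comp (splitH (d := d)).toRingHom
      = RingHom.id (MvPolynomial (Fin d × ℕ) ℂ) := by
    apply MvPolynomial.ringHom_ext
    · intro r
      rw [RingHom.comp_apply, RingHom.id_apply]
      have : (splitH (d := d)).toRingHom (C r) = C (C r) := splitH_C r
      rw [this, unsplitH, eval₂Hom_C]
      simp
    · intro p
      obtain ⟨i, k⟩ := p
      rw [RingHom.comp_apply, RingHom.id_apply]
      cases k with
      | zero =>
          have : (splitH (d := d)).toRingHom (X (i, 0)) = C (X i) := splitH_X0 i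
          rw [this, unsplitH, eval₂Hom_C]
          simp
      | succ k =>
          have : (splitH (d := d)).toRingHom (X (i, k + 1)) = X (i, k) := splitH_X1 i k
          rw [this, unsplitH, eval₂Hom_X']
  intro P Q hPQ
  have := congrArg (unsplitH (d := d)) hPQ
  have h1 := congrArg (fun g : MvPolynomial (Fin d × ℕ) ℂ →+* MvPolynomial (Fin d × ℕ) ℂ => g P) hcomp
  have h2 := congrArg (fun g : MvPolynomial (Fin d × ℕ) ℂ →+* MvPolynomial (Fin d × ℕ) ℂ => g Q) hcomp
  simp only [RingHom.comp_apply, RingHom.id_apply] at h1 h2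
  rw [← h1, ← h2]
  simpa using this

/-- Evaluation of the coefficient-split polynomial ring into the jet ring. -/
noncomputable def evalTopH : MvPolynomial (Fin d × ℕ) (MvPolynomial (Fin d) ℂ) →+*
    MvPolynomial (Fin n × ℕ) ℂ :=
  eval₂Hom ((rename (fun j => (j, 0))).comp (aeval y) :
      MvPolynomial (Fin d) ℂ →ₐ[ℂ] MvPolynomial (Fin n × ℕ) ℂ).toRingHom
    (fun q => (⇑(jetD n))^[q.2 + 1] (rename (fun j => (j, 0)) (y q.1)))

lemma evalTopH_splitH (P : MvPolynomial (Fin d × ℕ) ℂ) :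
    evalTopH y (splitH (d := d) P)
      = aeval (fun p : Fin d × ℕ =>
          (⇑(jetD n))^[p.2] (rename (fun j => (j, 0)) (y p.1))) P := by
  have hcomp : (evalTopH y).comp (splitH (d := d)).toRingHom
      = (aeval (fun p : Fin d × ℕ =>
          (⇑(jetD n))^[p.2] (rename (fun j => (j, 0)) (y p.1)))).toRingHom := by
    apply MvPolynomial.ringHom_ext
    · intro r
      rw [RingHom.comp_apply]
      have : (splitH (d := d)).toRingHom (C r) = C (C r) := splitH_C r
      rw [this, evalTopH, eval₂Hom_C]
      simp
    · intro p
      obtain ⟨i, k⟩ := p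
      rw [RingHom.comp_apply]
      cases k with
      | zero =>
          have : (splitH (d := d)).toRingHom (X (i, 0)) = C (X i) := splitH_X0 i
          rw [this, evalTopH, eval₂Hom_C]
          simp
      | succ k =>
          have : (splitH (d := d)).toRingHom (X (i, k + 1)) = X (i, k) := splitH_X1 i k
          rw [this, evalTopH, eval₂Hom_X']
          simp
  exact congrArg (fun g : _ →+* MvPolynomial (Fin n × ℕ) ℂ => g P) hcomp

lemma part1 (hrank : (Emat y pt).rank = d)
    (halg : AlgebraicIndependent ℂ y) :
    AlgebraicIndependent ℂ (fun p : Fin d × ℕ =>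
      (⇑(jetD n))^[p.2] (rename (fun j => (j, 0)) (y p.1))) := by
  rw [algebraicIndependent_iff]
  intro P hP
  set Q := splitH (d := d) P with hQ
  have hQ0 : evalTopH y Q = 0 := by
    rw [hQ, evalTopH_splitH, hP]
  set up : Fin d × ℕ → Fin d × ℕ := fun q => (q.1, q.2 + 1) with hup
  have hupinj : Function.Injective up := by
    intro a b hab
    simp only [hup, Prod.mk.injEq] at hab
    exact Prod.ext hab.1 (by omega)
  set c : ((Fin d × ℕ) →₀ ℕ) →₀ MvPolynomial (Fin n) ℂ :=
    ∑ e ∈ Q.support, Finsupp.single (Finsupp.mapDomain up e) (aeval y (coeff e Q)) with hc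
  have hsupp : ∀ e ∈ c.support, ∀ p ∈ e.support, 1 ≤ p.2 := by
    intro e he p hp
    have h1 := Finsupp.support_finset_sum (s := Q.support)
      (f := fun e => Finsupp.single (Finsupp.mapDomain up e) (aeval y (coeff e Q))) he
    rw [Finset.mem_biUnion] at h1
    obtain ⟨e₁, _, h2⟩ := h1
    have h3 := Finsupp.support_single_subset h2
    rw [Finset.mem_singleton] at h3
    subst h3
    have h4 := Finsupp.mapDomain_support hp
    rw [Finset.mem_image] at h4
    obtain ⟨q, _, rfl⟩ := h4
    simp [hup]
  have hrel : (c.sum fun e a => rename (fun j => (j, 0)) a *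
      e.prod fun p k =>
        ((⇑(jetD n))^[p.2] (rename (fun j => (j, 0)) (y p.1))) ^ k) = 0 := by
    rw [hc, ← Finsupp.sum_finsetSum_index
      (fun e => by rw [map_zero, zero_mul])
      (fun e a b => by rw [map_add, add_mul])]
    have h1 : ∀ e₁ ∈ Q.support,
        (Finsupp.single (Finsupp.mapDomain up e₁) (aeval y (coeff e₁ Q))).sum
          (fun e a => rename (fun j => (j, 0)) a *
            e.prod fun p k =>
              ((⇑(jetD n))^[p.2] (rename (fun j => (j, 0)) (y p.1))) ^ k)
        = rename (fun j => (j, 0)) (aeval y (coeff e₁ Q)) *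
            e₁.prod fun q k =>
              ((⇑(jetD n))^[q.2 + 1] (rename (fun j => (j, 0)) (y q.1))) ^ k := by
      intro e₁ _
      rw [Finsupp.sum_single_index (by rw [map_zero, zero_mul])]
      congr 1
      exact Finsupp.prod_mapDomain_index (fun q => pow_zero _) (fun q m₁ m₂ => pow_add _ _ _)
    rw [Finset.sum_congr rfl h1]
    rw [← hQ0, evalTopH]
    rw [coe_eval₂Hom, eval₂_eq]
    rfl
  have hc0 : c = 0 := part2 y pt hrank c hsupp hrel
  have hQzero : Q = 0 := by
    by_contra hQne
    obtain ⟨e₀, he₀⟩ := Finset.nonempty_of_ne_empty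
      (fun h => hQne (by rwa [← MvPolynomial.support_eq_empty]))
    have hval : c (Finsupp.mapDomain up e₀) = aeval y (coeff e₀ Q) := by
      rw [hc, Finsupp.finset_sum_apply]
      rw [Finset.sum_eq_single_of_mem e₀ he₀]
      · rw [Finsupp.single_apply, if_pos rfl]
      · intro e he hne
        rw [Finsupp.single_apply, if_neg]
        exact fun hEq => hne (Finsupp.mapDomain_injective hupinj hEq)
    rw [hc0, Finsupp.coe_zero, Pi.zero_apply] at hval
    have : coeff e₀ Q = 0 := algebraicIndependent_iff.mp halg _ hval.symm
    exact (MvPolynomial.mem_support_iff.mp he₀) this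
  have : P = 0 := splitH_injective (by rw [← hQ, hQzero, map_zero])
  exact this

end Part1

end Stmt13

/-- If `y_1,…,y_d ∈ ℂ[x_1,…,x_n]` are algebraically independent and their Jacobian
matrix has rank `d` at some point, then the jets `y_i^{(k)} = D^k(y_i)`,
`1 ≤ i ≤ d`, `k ≥ 0`, are algebraically independent over `ℂ`, and distinct
monomials in the `y_i^{(k)}` with `k ≥ 1` are linearly independent over
`ℂ(x_1,…,x_n)` (equivalently, over `ℂ[x_1,…,x_n]`). -/
theorem stmt_13 (n d : ℕ) (y : Fin d → MvPolynomial (Fin n) ℂ)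
    (halg : AlgebraicIndependent ℂ y)
    (hjac : ∃ pt : Fin n → ℂ,
      (Matrix.of fun (i : Fin d) (j : Fin n) =>
        MvPolynomial.eval pt (MvPolynomial.pderiv j (y i))).rank = d) :
    AlgebraicIndependent ℂ (fun p : Fin d × ℕ =>
      (⇑(jetD n))^[p.2] (rename (fun j => (j, 0)) (y p.1))) ∧
    ∀ c : ((Fin d × ℕ) →₀ ℕ) →₀ MvPolynomial (Fin n) ℂ,
      (∀ e ∈ c.support, ∀ p ∈ e.support, 1 ≤ p.2) →
      (c.sum fun e a => rename (fun j => (j, 0)) a *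
        e.prod fun p k =>
          ((⇑(jetD n))^[p.2] (rename (fun j => (j, 0)) (y p.1))) ^ k) = 0 →
      c = 0 := by
  obtain ⟨pt, hrank⟩ := hjac
  have hrank' : (Stmt13.Emat y pt).rank = d := hrank
  exact ⟨Stmt13.part1 y pt hrank' halg,
    fun c hs hr => Stmt13.part2 y pt hrank' c hs hr⟩
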